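/- arXiv:2502.04142 — 2 statements merged into one kernel-verified Lean document; each statement's English description precedes it below -/
import Mathlib

section
/- Let G_s be a symmetric nonnegative-definite real n×n matrix whose smallest eigenvalue is at least β > 0, and let G_a be antisymmetric with κ the largest eigenvalue of G_aᵀG_a. Then there exists R > 0 such that for all 0 < ρ < R and all x ∈ ℝⁿ, ‖(I − ρG_s − ρG_a)x‖₂ ≤ (1 − ρβ/2)‖x‖₂. -/
open Matrix

theorem stmt_11 (n : ℕ) (Gs Ga : Matrix (Fin n) (Fin n) ℝ)
    (hGs : Gs.transpose = Gs) (β : ℝ) (hβ : 0 < β)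
    (hGsβ : ∀ x : Fin n → ℝ, β * ∑ i, (x i)^2 ≤ x ⬝ᵥ Gs.mulVec x)
    (hGa : Ga.transpose = -Ga)
    (hH : (Ga.transpose * Ga).IsHermitian) (κ : ℝ)
    (hκ : IsGreatest (Set.range hH.eigenvalues) κ) :
    ∃ R : ℝ, 0 < R ∧ ∀ ρ : ℝ, 0 < ρ → ρ < R → ∀ x : Fin n → ℝ,
      Real.sqrt (∑ i, (((1 : Matrix (Fin n) (Fin n) ℝ) - ρ • Gs - ρ • Ga).mulVec x i)^2)
        ≤ (1 - ρ * β / 2) * Real.sqrt (∑ i, (x i)^2) := by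
  set B : Matrix (Fin n) (Fin n) ℝ := Gs + Ga with hB
  set C : ℝ := ∑ i, ∑ j, (B i j)^2 with hC
  have hC0 : 0 ≤ C := Finset.sum_nonneg fun i _ =>
    Finset.sum_nonneg fun j _ => sq_nonneg _
  refine ⟨min (β / (C + 1)) (1 / β), lt_min (div_pos hβ (by linarith)) (by positivity),
    fun ρ hρ hρR x => ?_⟩
  have hρC : ρ * C < β := by
    have h1 : ρ < β / (C + 1) := lt_of_lt_of_le hρR (min_le_left _ _)
    have := (lt_div_iff₀ (by linarith : (0:ℝ) < C + 1)).mp h1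
    nlinarith
  have hρβ : ρ * β < 1 := by
    have h2 : ρ < 1 / β := lt_of_lt_of_le hρR (min_le_right _ _)
    calc ρ * β < (1/β) * β := by nlinarith
    _ = 1 := by field_simp
  have hpos : 0 ≤ 1 - ρ * β / 2 := by linarith
  set S : ℝ := ∑ i, (x i)^2 with hS
  have hS0 : 0 ≤ S := Finset.sum_nonneg fun i _ => sq_nonneg _
  set z : Fin n → ℝ := B.mulVec x with hz
  -- antisymmetric part vanishes in the quadratic form
  have hGa0 : x ⬝ᵥ Ga.mulVec x = 0 := by
    have h1 : x ⬝ᵥ Ga.mulVec x = Ga.vecMul x ⬝ᵥ x := by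
      rw [Matrix.dotProduct_mulVec]
    have h2 : Ga.vecMul x = -(Ga.mulVec x) := by
      rw [← Matrix.mulVec_transpose, hGa, Matrix.neg_mulVec]
    have h3 : x ⬝ᵥ Ga.mulVec x = -(Ga.mulVec x ⬝ᵥ x) := by
      rw [h1, h2, neg_dotProduct]
    have h4 := dotProduct_comm (Ga.mulVec x) x
    rw [h4] at h3
    linarith
  have hxz : β * S ≤ x ⬝ᵥ z := by
    have : x ⬝ᵥ z = x ⬝ᵥ Gs.mulVec x + x ⬝ᵥ Ga.mulVec x := by
      rw [hz, hB, Matrix.add_mulVec, dotProduct_add]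
    rw [this, hGa0, add_zero]; exact hGsβ x
  -- Frobenius bound
  have hzC : ∑ i, (z i)^2 ≤ C * S := by
    rw [hC, Finset.sum_mul]
    apply Finset.sum_le_sum
    intro i _
    have := Finset.sum_mul_sq_le_sq_mul_sq Finset.univ (fun j => B i j) x
    simpa [Matrix.mulVec, dotProduct, hz, hS] using this
  -- rewrite LHS vector
  have hMx : ((1 : Matrix (Fin n) (Fin n) ℝ) - ρ • Gs - ρ • Ga).mulVec x
      = fun i => x i - ρ * z i := by
    funext i
    simp [Matrix.sub_mulVec, Matrix.one_mulVec, Matrix.smul_mulVec, hz, hB,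
      Matrix.add_mulVec, mul_add]
    ring
  have hexp : ∑ i, (((1 : Matrix (Fin n) (Fin n) ℝ) - ρ • Gs - ρ • Ga).mulVec x i)^2
      = S - 2 * ρ * (x ⬝ᵥ z) + ρ^2 * ∑ i, (z i)^2 := by
    rw [hMx, hS]
    simp only [dotProduct]
    rw [Finset.mul_sum, Finset.mul_sum, ← Finset.sum_sub_distrib, ← Finset.sum_add_distrib]
    apply Finset.sum_congr rfl
    intro i _
    ring
  have hkey : ∑ i, (((1 : Matrix (Fin n) (Fin n) ℝ) - ρ • Gs - ρ • Ga).mulVec x i)^2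
      ≤ (1 - ρ * β / 2)^2 * S := by
    rw [hexp]
    nlinarith [mul_le_mul_of_nonneg_left hzC (sq_nonneg ρ),
      mul_le_mul_of_nonneg_left hxz (mul_nonneg hρ.le (by norm_num : (0:ℝ) ≤ 2)),
      mul_nonneg (mul_nonneg hρ.le (sub_nonneg.mpr hρC.le)) hS0,
      mul_nonneg (sq_nonneg (ρ*β)) hS0]
  calc Real.sqrt (∑ i, (((1 : Matrix (Fin n) (Fin n) ℝ) - ρ • Gs - ρ • Ga).mulVec x i)^2)
      ≤ Real.sqrt ((1 - ρ * β / 2)^2 * S) := Real.sqrt_le_sqrt hkey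
    _ = (1 - ρ * β / 2) * Real.sqrt S := by
        rw [Real.sqrt_mul (sq_nonneg _), Real.sqrt_sq hpos]
end

section
/- Let T be a grid with N = ∏ᵢ (1/hᵢ)-order many interior points split into an interior set T₀ with |T₀| ≤ C/∏ᵢhᵢ where the local truncation error is bounded by C h², and a boundary-layer set T₁ with |T₁| ≤ C(∑ᵢhᵢ)/∏ᵢhᵢ where the local truncation error is bounded by C hᵠ. Then the weighted ℓ² global truncation error satisfies (∏ᵢ hᵢ)^{1/2} ‖τ‖_{ℓ²(T)} ≤ C' h^{min{2, q + 1/2}} for a constant C' independent of h, where h = maxᵢ hᵢ. -/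
theorem stmt_18 (d : ℕ) (hd : 0 < d) (C : ℝ) (hC : 0 < C) (q : ℝ)
    (hq0 : 0 ≤ q) (hq2 : q ≤ 2) :
    ∃ C' : ℝ, 0 < C' ∧
      ∀ (h : Fin d → ℝ), (∀ i, 0 < h i) → (∀ i, h i ≤ 1) →
      ∀ (H : ℝ), IsGreatest (Set.range h) H →
      ∀ (ι : Type) [DecidableEq ι] (T₀ T₁ : Finset ι) (τ : ι → ℝ),
        Disjoint T₀ T₁ →
        (T₀.card : ℝ) ≤ C / ∏ i, h i →
        (T₁.card : ℝ) ≤ C * (∑ i, h i) / ∏ i, h i →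
        (∀ x ∈ T₀, |τ x| ≤ C * H^2) →
        (∀ x ∈ T₁, |τ x| ≤ C * H^q) →
        (∏ i, h i)^((1:ℝ)/2) * Real.sqrt (∑ x ∈ T₀ ∪ T₁, (τ x)^2)
          ≤ C' * H^(min 2 (q + 1/2)) := by
  set m : ℝ := min 2 (q + 1/2) with hmdef
  refine ⟨Real.sqrt (C^3 * (1 + d)), by positivity, ?_⟩
  intro h hpos hle H hH ι _ T₀ T₁ τ hdisj hc0 hc1 hb0 hb1
  obtain ⟨⟨i0, hi0⟩, hub⟩ := hH
  have hHpos : 0 < H := hi0 ▸ hpos i0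
  have hH1 : H ≤ 1 := hi0 ▸ hle i0
  have hP : 0 < ∏ i, h i := Finset.prod_pos (fun i _ => hpos i)
  have hm2 : m ≤ 2 := min_le_left _ _
  have hmq : m ≤ q + 1/2 := min_le_right _ _
  -- bound on sums
  have hS0 : ∑ x ∈ T₀, (τ x)^2 ≤ (T₀.card : ℝ) * (C * H^2)^2 := by
    calc ∑ x ∈ T₀, (τ x)^2 ≤ ∑ _x ∈ T₀, (C * H^2)^2 := by
          refine Finset.sum_le_sum fun x hx => ?_
          calc (τ x)^2 = |τ x|^2 := (sq_abs _).symm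
            _ ≤ (C * H^2)^2 := pow_le_pow_left₀ (abs_nonneg _) (hb0 x hx) 2
      _ = (T₀.card : ℝ) * (C * H^2)^2 := by
          rw [Finset.sum_const, nsmul_eq_mul]
  have hS1 : ∑ x ∈ T₁, (τ x)^2 ≤ (T₁.card : ℝ) * (C * H^q)^2 := by
    calc ∑ x ∈ T₁, (τ x)^2 ≤ ∑ _x ∈ T₁, (C * H^q)^2 := by
          refine Finset.sum_le_sum fun x hx => ?_
          calc (τ x)^2 = |τ x|^2 := (sq_abs _).symm
            _ ≤ (C * H^q)^2 := pow_le_pow_left₀ (abs_nonneg _) (hb1 x hx) 2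
      _ = (T₁.card : ℝ) * (C * H^q)^2 := by
          rw [Finset.sum_const, nsmul_eq_mul]
  have hsum : ∑ x ∈ T₀ ∪ T₁, (τ x)^2 = (∑ x ∈ T₀, (τ x)^2) + ∑ x ∈ T₁, (τ x)^2 :=
    Finset.sum_union hdisj
  have hsumh : ∑ i, h i ≤ (d : ℝ) * H := by
    calc ∑ i, h i ≤ ∑ _i : Fin d, H :=
          Finset.sum_le_sum fun i _ => hub ⟨i, rfl⟩
      _ = (d : ℝ) * H := by simp [mul_comm]
  -- main bound on (∏ h) * sum
  have key : (∏ i, h i) * ∑ x ∈ T₀ ∪ T₁, (τ x)^2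
      ≤ C^3 * (1 + d) * H ^ (2 * m) := by
    have h1 : (∏ i, h i) * ((T₀.card : ℝ) * (C * H^2)^2)
        ≤ C^3 * H ^ (4:ℝ) := by
      have : (∏ i, h i) * ((T₀.card : ℝ) * (C * H^2)^2)
          ≤ (∏ i, h i) * ((C / ∏ i, h i) * (C * H^2)^2) := by
        have := mul_le_mul_of_nonneg_right hc0 (by positivity : (0:ℝ) ≤ (C * H^2)^2)
        nlinarith [hP]
      calc (∏ i, h i) * ((T₀.card : ℝ) * (C * H^2)^2)
          ≤ (∏ i, h i) * ((C / ∏ i, h i) * (C * H^2)^2) := this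
        _ = C^3 * H^(4:ℕ) := by field_simp
        _ = C^3 * H ^ (4:ℝ) := by rw [← Real.rpow_natCast H 4]; norm_num
    have h2 : (∏ i, h i) * ((T₁.card : ℝ) * (C * H^q)^2)
        ≤ C^3 * d * H ^ (1 + 2*q) := by
      have hq2' : (C * H^q)^2 = C^2 * H ^ (2*q) := by
        rw [mul_pow, ← Real.rpow_natCast (H^q) 2, ← Real.rpow_mul hHpos.le]
        norm_num [mul_comm]
      have step1 : (∏ i, h i) * ((T₁.card : ℝ) * (C * H^q)^2)
          ≤ (∏ i, h i) * ((C * (∑ i, h i) / ∏ i, h i) * (C * H^q)^2) := by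
        have := mul_le_mul_of_nonneg_right hc1 (by positivity : (0:ℝ) ≤ (C * H^q)^2)
        nlinarith [hP]
      have step2 : (∏ i, h i) * ((C * (∑ i, h i) / ∏ i, h i) * (C * H^q)^2)
          = C^3 * (∑ i, h i) * H ^ (2*q) := by
        rw [hq2']; field_simp
      calc (∏ i, h i) * ((T₁.card : ℝ) * (C * H^q)^2)
          ≤ C^3 * (∑ i, h i) * H ^ (2*q) := step2 ▸ step1
        _ ≤ C^3 * ((d : ℝ) * H) * H ^ (2*q) := by
            have hHq : (0:ℝ) ≤ H ^ (2*q) := Real.rpow_nonneg hHpos.le _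
            nlinarith [mul_le_mul_of_nonneg_left (mul_le_mul_of_nonneg_right hsumh hHq)
              (by positivity : (0:ℝ) ≤ C^3)]
        _ = C^3 * d * H ^ (1 + 2*q) := by
            rw [Real.rpow_add hHpos, Real.rpow_one]; ring
    have h4m : H ^ (4:ℝ) ≤ H ^ (2*m) :=
      Real.rpow_le_rpow_of_exponent_ge hHpos hH1 (by linarith)
    have hqm : H ^ (1 + 2*q) ≤ H ^ (2*m) :=
      Real.rpow_le_rpow_of_exponent_ge hHpos hH1 (by linarith)
    calc (∏ i, h i) * ∑ x ∈ T₀ ∪ T₁, (τ x)^2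
        = (∏ i, h i) * (∑ x ∈ T₀, (τ x)^2) + (∏ i, h i) * ∑ x ∈ T₁, (τ x)^2 := by
          rw [hsum]; ring
      _ ≤ (∏ i, h i) * ((T₀.card : ℝ) * (C * H^2)^2)
            + (∏ i, h i) * ((T₁.card : ℝ) * (C * H^q)^2) := by
          gcongr
      _ ≤ C^3 * H ^ (4:ℝ) + C^3 * d * H ^ (1 + 2*q) := add_le_add h1 h2
      _ ≤ C^3 * H ^ (2*m) + C^3 * d * H ^ (2*m) := by
          gcongr <;> positivity
      _ = C^3 * (1 + d) * H ^ (2*m) := by ring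
  -- conclude
  have hLHS : (∏ i, h i)^((1:ℝ)/2) * Real.sqrt (∑ x ∈ T₀ ∪ T₁, (τ x)^2)
      = Real.sqrt ((∏ i, h i) * ∑ x ∈ T₀ ∪ T₁, (τ x)^2) := by
    rw [← Real.sqrt_eq_rpow, Real.sqrt_mul hP.le]
  rw [hLHS]
  calc Real.sqrt ((∏ i, h i) * ∑ x ∈ T₀ ∪ T₁, (τ x)^2)
      ≤ Real.sqrt (C^3 * (1 + d) * H ^ (2*m)) := Real.sqrt_le_sqrt key
    _ = Real.sqrt (C^3 * (1 + d)) * Real.sqrt (H ^ (2*m)) := by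
        rw [Real.sqrt_mul (by positivity)]
    _ = Real.sqrt (C^3 * (1 + d)) * H ^ m := by
        congr 1
        rw [Real.sqrt_eq_rpow, ← Real.rpow_mul hHpos.le]
        congr 1
        ring
end
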